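/- (Two-point feedback second-moment bound.) Let (Ξ, ν) be a probability space and F : ℝ^d × Ξ → ℝ be such that for every ξ, the function F(·, ξ) is differentiable with L₂-Lipschitz gradient (the same L₂ for all ξ). Let δ : ℝ^d → ℝ satisfy |δ(x)| ≤ Δ for all x, let ξ be distributed according to ν independently of (e, r), and define g̃(x, ξ, e, r) := d (F(x + γ r e, ξ) + δ(x + γ r e) − F(x − γ r e, ξ) − δ(x − γ r e)) K(r) e/(2γ). Then for every x ∈ ℝ^d, E[‖g̃(x, ξ, e, r)‖₂²] ≤ κ (6 d E_ξ[‖∇_x F(x, ξ)‖₂²] + (3/4) d² L₂² γ²) + 2 κ d² Δ²/γ². -/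

import Mathlib

open MeasureTheory ProbabilityTheory Filter
open scoped ENNReal RealInnerProductSpace Topology

private lemma taylor_quad {d : ℕ} (f : EuclideanSpace ℝ (Fin d) → ℝ) (L : ℝ)
    (hf : Differentiable ℝ f)
    (hlip : ∀ a b, ‖gradient f a - gradient f b‖ ≤ L * ‖a - b‖)
    (x h : EuclideanSpace ℝ (Fin d)) :
    |f (x + h) - f x - ⟪gradient f x, h⟫| ≤ L / 2 * ‖h‖ ^ 2 := by
  have hg : ∀ t : ℝ, HasDerivAt (fun t : ℝ => f (x + t • h))
      ⟪gradient f (x + t • h), h⟫ t := by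
    intro t
    have hline : HasDerivAt (fun t : ℝ => x + t • h) h t := by
      simpa using ((hasDerivAt_id t).smul_const h).const_add x
    have hF : HasFDerivAt f (InnerProductSpace.toDual ℝ _ (gradient f (x + t • h)))
        (x + t • h) := (hf _).hasGradientAt.hasFDerivAt
    simpa [InnerProductSpace.toDual_apply_apply, Function.comp_def] using hF.comp_hasDerivAt t hline
  set g : ℝ → ℝ := fun t => f (x + t • h) with hgdef
  have hderiv_bound : ∀ t ∈ Set.Icc (0:ℝ) 1,
      |⟪gradient f (x + t • h), h⟫ - ⟪gradient f x, h⟫| ≤ L * ‖h‖ ^ 2 * t := by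
    intro t ht
    have h1 : ⟪gradient f (x + t • h), h⟫ - ⟪gradient f x, h⟫
        = ⟪gradient f (x + t • h) - gradient f x, h⟫ := by
      rw [inner_sub_left]
    rw [h1]
    calc |⟪gradient f (x + t • h) - gradient f x, h⟫|
        ≤ ‖gradient f (x + t • h) - gradient f x‖ * ‖h‖ := abs_real_inner_le_norm _ _
      _ ≤ (L * ‖x + t • h - x‖) * ‖h‖ :=
          mul_le_mul_of_nonneg_right (hlip _ _) (norm_nonneg _)
      _ = L * ‖h‖ ^ 2 * t := by
          have : ‖x + t • h - x‖ = t * ‖h‖ := by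
            simp [norm_smul, abs_of_nonneg ht.1]
          rw [this]; ring
  have main : ∀ s : ℝ, s = 1 ∨ s = -1 →
      s * (g 1 - g 0 - ⟪gradient f x, h⟫) ≤ L / 2 * ‖h‖ ^ 2 := by
    intro s hs
    set φ : ℝ → ℝ := fun t => s * (g t - g 0 - t * ⟪gradient f x, h⟫) - L / 2 * ‖h‖ ^ 2 * t ^ 2
      with hφdef
    have hφd : ∀ t : ℝ, HasDerivAt φ
        (s * (⟪gradient f (x + t • h), h⟫ - ⟪gradient f x, h⟫) - L * ‖h‖ ^ 2 * t) t := by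
      intro t
      have h1 : HasDerivAt (fun t : ℝ => g t - g 0 - t * ⟪gradient f x, h⟫)
          (⟪gradient f (x + t • h), h⟫ - ⟪gradient f x, h⟫) t := by
        simpa [Pi.sub_def] using ((hg t).sub_const (g 0)).sub
          ((hasDerivAt_id t).mul_const ⟪gradient f x, h⟫)
      have h2 : HasDerivAt (fun t : ℝ => L / 2 * ‖h‖ ^ 2 * t ^ 2) (L * ‖h‖ ^ 2 * t) t := by
        have := ((hasDerivAt_pow 2 t).const_mul (L / 2 * ‖h‖ ^ 2))
        refine this.congr_deriv ?_
        ring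
      simpa [Pi.sub_def, hφdef] using (h1.const_mul s).sub h2
    have hanti : AntitoneOn φ (Set.Icc (0:ℝ) 1) := by
      apply antitoneOn_of_deriv_nonpos (convex_Icc 0 1)
      · exact fun t _ => ((hφd t).continuousAt).continuousWithinAt
      · intro t ht
        exact ((hφd t).differentiableAt).differentiableWithinAt
      · intro t ht
        rw [interior_Icc] at ht
        rw [(hφd t).deriv]
        have hb := hderiv_bound t ⟨le_of_lt ht.1, le_of_lt ht.2⟩
        have hs1 : |s| = 1 := by rcases hs with h | h <;> simp [h]
        have : |s * (⟪gradient f (x + t • h), h⟫ - ⟪gradient f x, h⟫)| ≤ L * ‖h‖ ^ 2 * t := by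
          rw [abs_mul, hs1, one_mul]; exact hb
        linarith [abs_le.mp this]
    have h01 := hanti (Set.mem_Icc.mpr ⟨le_refl 0, zero_le_one⟩)
      (Set.mem_Icc.mpr ⟨zero_le_one, le_refl 1⟩) zero_le_one
    have hφ0 : φ 0 = 0 := by simp [hφdef]
    have hφ1 : φ 1 = s * (g 1 - g 0 - ⟪gradient f x, h⟫) - L / 2 * ‖h‖ ^ 2 := by
      simp [hφdef]
    rw [hφ0, hφ1] at h01
    linarith
  have hg1 : g 1 = f (x + h) := by simp [hgdef]
  have hg0 : g 0 = f x := by simp [hgdef]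
  rw [abs_le]
  constructor
  · have := main (-1) (Or.inr rfl)
    rw [hg1, hg0] at this; linarith
  · have := main 1 (Or.inl rfl)
    rw [hg1, hg0] at this; linarith

private lemma grad_dir_meas {d : ℕ} {Ξ : Type*} [MeasurableSpace Ξ]
    (F : EuclideanSpace ℝ (Fin d) → Ξ → ℝ)
    (hF_meas : Measurable (Function.uncurry F))
    (hF_diff : ∀ s, Differentiable ℝ (fun y => F y s))
    (x w : EuclideanSpace ℝ (Fin d)) :
    Measurable (fun s => (⟪gradient (fun y => F y s) x, w⟫ : ℝ)) := by
  have hFy : ∀ y : EuclideanSpace ℝ (Fin d), Measurable (fun s => F y s) := fun y =>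
    hF_meas.comp (measurable_prodMk_left)
  set a : ℕ → ℝ := fun n => ((n : ℝ) + 1)⁻¹ with ha
  have ha_pos : ∀ n, a n ≠ 0 := by
    intro n
    have : (0:ℝ) < (n:ℝ) + 1 := by positivity
    simp [ha, ne_of_gt this]
  have ha_tendsto : Tendsto a atTop (𝓝[≠] (0:ℝ)) := by
    apply tendsto_nhdsWithin_of_tendsto_nhds_of_eventually_within
    · simpa [ha, one_div] using tendsto_one_div_add_atTop_nhds_zero_nat (𝕜 := ℝ)
    · exact Eventually.of_forall fun n => ha_pos n
  have key : ∀ s, Tendsto (fun n => (F (x + a n • w) s - F x s) / a n) atTop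
      (𝓝 (⟪gradient (fun y => F y s) x, w⟫ : ℝ)) := by
    intro s
    have hg : HasDerivAt (fun t : ℝ => F (x + t • w) s)
        (⟪gradient (fun y => F y s) x, w⟫ : ℝ) 0 := by
      have hline : HasDerivAt (fun t : ℝ => x + t • w) w 0 := by
        simpa using ((hasDerivAt_id (0:ℝ)).smul_const w).const_add x
      have hF : HasFDerivAt (fun y => F y s)
          (InnerProductSpace.toDual ℝ _ (gradient (fun y => F y s) x)) (x + (0:ℝ) • w) := by
        simpa using (hF_diff s x).hasGradientAt.hasFDerivAt
      have := hF.comp_hasDerivAt (0:ℝ) hline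
      simpa [InnerProductSpace.toDual_apply_apply, Function.comp_def] using this
    have hslope := (hasDerivAt_iff_tendsto_slope.mp hg).comp ha_tendsto
    refine hslope.congr fun n => ?_
    simp [Function.comp, slope_def_field, ha]
  exact measurable_of_tendsto_metrizable
    (fun n => ((hFy _).sub (hFy _)).div_const _) (tendsto_pi_nhds.mpr key)

private lemma grad_meas {d : ℕ} {Ξ : Type*} [MeasurableSpace Ξ]
    (F : EuclideanSpace ℝ (Fin d) → Ξ → ℝ)
    (hF_meas : Measurable (Function.uncurry F))
    (hF_diff : ∀ s, Differentiable ℝ (fun y => F y s))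
    (x : EuclideanSpace ℝ (Fin d)) :
    Measurable (fun s => gradient (fun y => F y s) x) := by
  have : Measurable fun s => (MeasurableEquiv.toLp 2 (Fin d → ℝ)).symm
      (gradient (fun y => F y s) x) := by
    rw [measurable_pi_iff]
    intro i
    have := grad_dir_meas F hF_meas hF_diff x (EuclideanSpace.single i (1:ℝ))
    simp only [EuclideanSpace.inner_single_right] at this
    simpa using this
  have h2 := (MeasurableEquiv.toLp 2 (Fin d → ℝ)).measurable.comp this
  simpa [Function.comp_def] using h2

private lemma sphere_moment {Ω : Type*} {m0 : MeasurableSpace Ω} (P : Measure Ω)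
    [IsProbabilityMeasure P] {d : ℕ}
    (e : Ω → EuclideanSpace ℝ (Fin d)) (he_meas : Measurable e)
    (he_norm : ∀ ω, ‖e ω‖ = 1)
    (he_unif : ∀ O : EuclideanSpace ℝ (Fin d) ≃ₗᵢ[ℝ] EuclideanSpace ℝ (Fin d),
      Measure.map (fun ω => O (e ω)) P = Measure.map e P)
    (v : EuclideanSpace ℝ (Fin d)) :
    ∫ ω, (⟪v, e ω⟫ : ℝ) ^ 2 ∂P = ‖v‖ ^ 2 / d := by
  have hd : 0 < d := by
    rcases isEmpty_or_nonempty Ω with hΩ | hΩ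
    · exfalso
      have h1 : P Set.univ = 1 := measure_univ
      rw [Set.univ_eq_empty_iff.mpr hΩ] at h1
      simp at h1
    · obtain ⟨ω⟩ := hΩ
      by_contra hc
      push_neg at hc
      interval_cases d
      have := he_norm ω
      have h0 : e ω = 0 := Subsingleton.elim _ _
      rw [h0] at this; simp at this
  set J : EuclideanSpace ℝ (Fin d) → ℝ := fun w => ∫ ω, (⟪w, e ω⟫ : ℝ) ^ 2 ∂P with hJ
  have hmeas : ∀ w : EuclideanSpace ℝ (Fin d),
      Measurable (fun u : EuclideanSpace ℝ (Fin d) => (⟪w, u⟫ : ℝ) ^ 2) := by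
    intro w
    exact ((continuous_const.inner continuous_id).pow 2).measurable
  have hint : ∀ w : EuclideanSpace ℝ (Fin d),
      Integrable (fun ω => (⟪w, e ω⟫ : ℝ) ^ 2) P := by
    intro w
    refine Integrable.mono' (integrable_const (‖w‖ ^ 2))
      (((hmeas w).comp he_meas).aestronglyMeasurable) (Eventually.of_forall fun ω => ?_)
    have h1 : |(⟪w, e ω⟫ : ℝ)| ≤ ‖w‖ * ‖e ω‖ := abs_real_inner_le_norm _ _
    rw [he_norm ω, mul_one] at h1
    calc ‖(⟪w, e ω⟫ : ℝ) ^ 2‖ = |(⟪w, e ω⟫ : ℝ)| ^ 2 := by rw [Real.norm_eq_abs, abs_pow]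
      _ ≤ ‖w‖ ^ 2 := by exact pow_le_pow_left₀ (abs_nonneg _) h1 2
  have hinv : ∀ (O : EuclideanSpace ℝ (Fin d) ≃ₗᵢ[ℝ] EuclideanSpace ℝ (Fin d)) (w), J (O w) = J w := by
    intro O w
    have h1 : J (O w) = ∫ u, (⟪O w, u⟫ : ℝ) ^ 2 ∂(Measure.map e P) := by
      rw [integral_map he_meas.aemeasurable (hmeas (O w)).aestronglyMeasurable]
    have hOe : Measurable fun ω => O (e ω) := O.continuous.measurable.comp he_meas
    rw [h1, ← he_unif O, integral_map hOe.aemeasurable (hmeas (O w)).aestronglyMeasurable]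
    simp only [hJ]
    congr 1
    ext ω
    congr 1
    exact O.inner_map_map w (e ω)
  have hnorm_eq : ∀ w₁ w₂ : EuclideanSpace ℝ (Fin d), ‖w₁‖ = ‖w₂‖ → J w₁ = J w₂ := by
    intro w₁ w₂ hn
    have hO := Submodule.reflection_sub hn
    have := hinv (Submodule.reflection (ℝ ∙ (w₁ - w₂))ᗮ) w₁
    rw [hO] at this
    exact this.symm
  set b : OrthonormalBasis (Fin d) ℝ (EuclideanSpace ℝ (Fin d)) :=
    EuclideanSpace.basisFun (Fin d) ℝ with hb
  have hsum : ∑ i, J (b i) = 1 := by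
    rw [← integral_finset_sum _ (fun i _ => hint (b i))]
    have : ∀ ω, ∑ i, (⟪b i, e ω⟫ : ℝ) ^ 2 = 1 := by
      intro ω
      have h1 : ∑ i, (⟪b i, e ω⟫ : ℝ) ^ 2 = ‖e ω‖ ^ 2 := by
        have := b.sum_inner_mul_inner (e ω) (e ω)
        calc ∑ i, (⟪b i, e ω⟫ : ℝ) ^ 2 = ∑ i, ⟪e ω, b i⟫ * ⟪b i, e ω⟫ := by
              refine Finset.sum_congr rfl fun i _ => ?_
              rw [real_inner_comm (b i) (e ω)]; ring
          _ = ⟪e ω, e ω⟫ := b.sum_inner_mul_inner (e ω) (e ω)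
          _ = ‖e ω‖ ^ 2 := real_inner_self_eq_norm_sq (e ω)
      rw [h1, he_norm ω, one_pow]
    simp only [this]
    simp
  have hJb : ∀ i j, J (b i) = J (b j) := fun i j =>
    hnorm_eq _ _ (by rw [b.orthonormal.1 i, b.orthonormal.1 j])
  have i0 : Fin d := ⟨0, hd⟩
  have hJb0 : J (b i0) = 1 / d := by
    have : ∑ i, J (b i) = d * J (b i0) := by
      rw [Finset.sum_congr rfl fun i _ => hJb i i0]
      simp [Finset.card_univ, mul_comm]
    rw [this] at hsum
    field_simp
    linarith [hsum]
  rcases eq_or_ne v 0 with hv | hv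
  · simp [hJ, hv]
  · have hvn : ‖v‖ ≠ 0 := norm_ne_zero_iff.mpr hv
    set u : EuclideanSpace ℝ (Fin d) := ‖v‖⁻¹ • v with hu
    have hun : ‖u‖ = 1 := by
      rw [hu, norm_smul]
      simp [abs_of_nonneg (inv_nonneg.mpr (norm_nonneg v)), inv_mul_cancel₀ hvn]
    have hJu : J u = 1 / d := by
      rw [hnorm_eq u (b i0) (by rw [hun, b.orthonormal.1 i0])]
      exact hJb0
    have hdecomp : ∀ ω, (⟪v, e ω⟫ : ℝ) ^ 2 = ‖v‖ ^ 2 * (⟪u, e ω⟫ : ℝ) ^ 2 := by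
      intro ω
      have : v = ‖v‖ • u := by
        rw [hu, smul_smul, mul_inv_cancel₀ hvn, one_smul]
      calc (⟪v, e ω⟫ : ℝ) ^ 2 = (⟪‖v‖ • u, e ω⟫ : ℝ) ^ 2 := by rw [← this]
        _ = (‖v‖ * ⟪u, e ω⟫) ^ 2 := by rw [real_inner_smul_left]
        _ = ‖v‖ ^ 2 * (⟪u, e ω⟫ : ℝ) ^ 2 := by ring
    have : J v = ‖v‖ ^ 2 * J u := by
      simp only [hJ]
      rw [← integral_const_mul]
      exact integral_congr_ae (Eventually.of_forall fun ω => hdecomp ω)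
    calc ∫ ω, (⟪v, e ω⟫ : ℝ) ^ 2 ∂P = J v := rfl
      _ = ‖v‖ ^ 2 * J u := this
      _ = ‖v‖ ^ 2 * (1 / d) := by rw [hJu]
      _ = ‖v‖ ^ 2 / d := by ring

set_option maxHeartbeats 1000000 in
/-- Second-moment bound for the two-point kernel-based gradient approximation,
where for every realization `s` the function `F(·, s)` is differentiable with `L₂`-Lipschitz
gradient, both evaluations share the same realization `ξ ∼ ν` independent of `(e, r)`, and the
oracle carries bounded adversarial deterministic noise `δ` with `|δ| ≤ Δ`:
`E[‖g̃(x,ξ,e,r)‖²] ≤ κ(6d E_ξ[‖∇ₓF(x,ξ)‖²] + (3/4)d²L₂²γ²) + 2κd²Δ²/γ²`. -/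
theorem kernel_second_moment_two_point_feedback
    {Ω : Type*} {m0 : MeasurableSpace Ω} (P : Measure Ω) [IsProbabilityMeasure P]
    {Ξ : Type*} [MeasurableSpace Ξ] (ν : Measure Ξ) [IsProbabilityMeasure ν]
    {d : ℕ} (F : EuclideanSpace ℝ (Fin d) → Ξ → ℝ) (L₂ : ℝ)
    (hF_meas : Measurable (Function.uncurry F))
    (hF_diff : ∀ s, Differentiable ℝ (fun y => F y s))
    (hF_lip : ∀ s, ∀ x y : EuclideanSpace ℝ (Fin d),
      ‖gradient (fun y' => F y' s) x - gradient (fun y' => F y' s) y‖ ≤ L₂ * ‖x - y‖)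
    (δ : EuclideanSpace ℝ (Fin d) → ℝ) (Δ : ℝ) (hδ_meas : Measurable δ)
    (hδ : ∀ x, |δ x| ≤ Δ)
    (γ : ℝ) (hγ : 0 < γ)
    (e : Ω → EuclideanSpace ℝ (Fin d)) (r : Ω → ℝ) (ξ : Ω → Ξ) (K : ℝ → ℝ)
    (he_meas : Measurable e) (he_norm : ∀ ω, ‖e ω‖ = 1)
    (he_unif : ∀ O : EuclideanSpace ℝ (Fin d) ≃ₗᵢ[ℝ] EuclideanSpace ℝ (Fin d),
      Measure.map (fun ω => O (e ω)) P = Measure.map e P)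
    (hr_meas : Measurable r)
    (hr_unif : Measure.map r P = (2⁻¹ : ℝ≥0∞) • volume.restrict (Set.Icc (-1 : ℝ) 1))
    (hindep : IndepFun e r P)
    (hξ_meas : Measurable ξ) (hξ_law : Measure.map ξ P = ν)
    (hξ_indep : IndepFun (fun ω => (e ω, r ω)) ξ P)
    (hK_meas : Measurable K)
    (hK2_int : Integrable (fun ω => (K (r ω)) ^ 2) P)
    (x : EuclideanSpace ℝ (Fin d))
    (hgrad_int : Integrable (fun s => ‖gradient (fun y => F y s) x‖ ^ 2) ν) :
    ∫ ω, ‖((d : ℝ) / (2 * γ) *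
          ((F (x + (γ * r ω) • e ω) (ξ ω) + δ (x + (γ * r ω) • e ω))
            - (F (x - (γ * r ω) • e ω) (ξ ω) + δ (x - (γ * r ω) • e ω))) * K (r ω)) • e ω‖ ^ 2 ∂P
      ≤ (∫ ω, (K (r ω)) ^ 2 ∂P) *
          (6 * d * (∫ s, ‖gradient (fun y => F y s) x‖ ^ 2 ∂ν)
            + 3 / 4 * (d : ℝ) ^ 2 * L₂ ^ 2 * γ ^ 2)
        + 2 * (∫ ω, (K (r ω)) ^ 2 ∂P) * (d : ℝ) ^ 2 * Δ ^ 2 / γ ^ 2 := by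
  classical
  set v : Ξ → EuclideanSpace ℝ (Fin d) := fun s => gradient (fun y => F y s) x with hvdef
  -- basic facts
  have hd : 0 < d := by
    rcases isEmpty_or_nonempty Ω with hΩ | hΩ
    · exfalso
      have h1 : P Set.univ = 1 := measure_univ
      rw [Set.univ_eq_empty_iff.mpr hΩ] at h1
      simp at h1
    · obtain ⟨ω⟩ := hΩ
      by_contra hc
      push_neg at hc
      interval_cases d
      have := he_norm ω
      have h0 : e ω = 0 := Subsingleton.elim _ _
      rw [h0] at this; simp at this
  have hdne : (d : ℝ) ≠ 0 := Nat.cast_ne_zero.mpr hd.ne'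
  have hγne : γ ≠ 0 := hγ.ne'
  have hv_meas : Measurable v := grad_meas F hF_meas hF_diff x
  -- a.e. |r| ≤ 1
  have hr_ae : ∀ᵐ ω ∂P, r ω ∈ Set.Icc (-1 : ℝ) 1 := by
    have hms : MeasurableSet (Set.Icc (-1 : ℝ) 1) := measurableSet_Icc
    have h0 : P (r ⁻¹' (Set.Icc (-1 : ℝ) 1)ᶜ) = 0 := by
      rw [← Measure.map_apply hr_meas hms.compl, hr_unif]
      simp [Measure.restrict_apply hms.compl]
    rw [ae_iff]
    exact h0
  -- measures
  set μe : Measure (EuclideanSpace ℝ (Fin d)) := Measure.map e P with hμe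
  set μr : Measure ℝ := Measure.map r P with hμr
  haveI : IsProbabilityMeasure μe := Measure.isProbabilityMeasure_map he_meas.aemeasurable
  haveI : IsProbabilityMeasure μr := Measure.isProbabilityMeasure_map hr_meas.aemeasurable
  set T : Ω → (EuclideanSpace ℝ (Fin d) × ℝ) × Ξ := fun ω => ((e ω, r ω), ξ ω) with hT
  have hT_meas : Measurable T := (he_meas.prodMk hr_meas).prodMk hξ_meas
  have hmap2 : Measure.map (fun ω => (e ω, r ω)) P = μe.prod μr :=
    (indepFun_iff_map_prod_eq_prod_map_map he_meas.aemeasurable hr_meas.aemeasurable).mp hindep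
  have hmap3 : Measure.map T P = (μe.prod μr).prod ν := by
    have := (indepFun_iff_map_prod_eq_prod_map_map
      (he_meas.prodMk hr_meas).aemeasurable hξ_meas.aemeasurable).mp hξ_indep
    rw [hmap2, hξ_law] at this
    exact this
  -- the product-space function
  set f3 : (EuclideanSpace ℝ (Fin d) × ℝ) × Ξ → ℝ := fun p => K p.1.2 ^ 2 * (⟪v p.2, p.1.1⟫ : ℝ) ^ 2 with hf3
  have hf3_meas : Measurable f3 := by
    have hKp : Measurable fun p : (EuclideanSpace ℝ (Fin d) × ℝ) × Ξ => K p.1.2 ^ 2 :=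
      (hK_meas.comp (measurable_snd.comp measurable_fst)).pow_const 2
    have hip : Measurable fun p : (EuclideanSpace ℝ (Fin d) × ℝ) × Ξ => (⟪v p.2, p.1.1⟫ : ℝ) :=
      continuous_inner.measurable.comp
        ((hv_meas.comp measurable_snd).prodMk (measurable_fst.comp measurable_fst))
    exact hKp.mul (hip.pow_const 2)
  -- unit-norm a.e. facts
  have hset1 : MeasurableSet {u : EuclideanSpace ℝ (Fin d) | ‖u‖ = 1} :=
    (isClosed_eq continuous_norm continuous_const).measurableSet
  have hμe_null : μe {u : EuclideanSpace ℝ (Fin d) | ‖u‖ = 1}ᶜ = 0 := by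
    rw [hμe, Measure.map_apply he_meas hset1.compl]
    have : e ⁻¹' {u : EuclideanSpace ℝ (Fin d) | ‖u‖ = 1}ᶜ = ∅ := by
      ext ω; simp [he_norm ω]
    rw [this]; simp
  have hae3 : ∀ᵐ p ∂((μe.prod μr).prod ν), ‖p.1.1‖ = 1 := by
    rw [ae_iff]
    refine measure_mono_null (fun p hp => ?_)
      (show ((μe.prod μr).prod ν) (({u : EuclideanSpace ℝ (Fin d) | ‖u‖ = 1}ᶜ ×ˢ Set.univ) ×ˢ Set.univ) = 0 from ?_)
    · exact ⟨⟨hp, Set.mem_univ _⟩, Set.mem_univ _⟩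
    · rw [Measure.prod_prod, Measure.prod_prod, hμe_null]
      simp
  have hae2 : ∀ᵐ z ∂(μe.prod ν), ‖z.1‖ = 1 := by
    rw [ae_iff]
    refine measure_mono_null (fun z hz => ?_)
      (show (μe.prod ν) ({u : EuclideanSpace ℝ (Fin d) | ‖u‖ = 1}ᶜ ×ˢ Set.univ) = 0 from ?_)
    · exact ⟨hz, Set.mem_univ _⟩
    · rw [Measure.prod_prod, hμe_null]
      simp
  -- integrability
  have hKr_int : Integrable (fun t => K t ^ 2) μr :=
    (integrable_map_measure (hK_meas.pow_const 2).aestronglyMeasurable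
      hr_meas.aemeasurable).mpr hK2_int
  have hKq_int : Integrable (fun q : EuclideanSpace ℝ (Fin d) × ℝ => K q.2 ^ 2) (μe.prod μr) := by
    have := (integrable_const (1 : ℝ) : Integrable _ μe).mul_prod hKr_int
    simpa using this
  have hg3_int : Integrable (fun p : (EuclideanSpace ℝ (Fin d) × ℝ) × Ξ => K p.1.2 ^ 2 * ‖v p.2‖ ^ 2)
      ((μe.prod μr).prod ν) := hKq_int.mul_prod hgrad_int
  have hf3_int : Integrable f3 ((μe.prod μr).prod ν) := by
    refine hg3_int.mono' hf3_meas.aestronglyMeasurable ?_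
    filter_upwards [hae3] with p hp
    have h1 : |(⟪v p.2, p.1.1⟫ : ℝ)| ≤ ‖v p.2‖ * ‖p.1.1‖ := abs_real_inner_le_norm _ _
    rw [hp, mul_one] at h1
    have h2 : (⟪v p.2, p.1.1⟫ : ℝ) ^ 2 ≤ ‖v p.2‖ ^ 2 := by
      rw [← sq_abs]
      exact pow_le_pow_left₀ (abs_nonneg _) h1 2
    rw [hf3, Real.norm_eq_abs, abs_of_nonneg (by positivity)]
    have hk2 : (0:ℝ) ≤ K p.1.2 ^ 2 := sq_nonneg _
    calc K p.1.2 ^ 2 * (⟪v p.2, p.1.1⟫ : ℝ) ^ 2 ≤ K p.1.2 ^ 2 * ‖v p.2‖ ^ 2 :=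
          mul_le_mul_of_nonneg_left h2 hk2
      _ = K p.1.2 ^ 2 * ‖v p.2‖ ^ 2 := rfl
  have hcomp_int : Integrable (fun ω => K (r ω) ^ 2 * (⟪v (ξ ω), e ω⟫ : ℝ) ^ 2) P := by
    have h := (integrable_map_measure hf3_meas.aestronglyMeasurable hT_meas.aemeasurable).mp
      (by rw [hmap3]; exact hf3_int)
    exact h
  -- value of the mixed integral
  have hκ : ∫ ω, K (r ω) ^ 2 ∂P = ∫ t, K t ^ 2 ∂μr :=
    (integral_map hr_meas.aemeasurable (hK_meas.pow_const 2).aestronglyMeasurable).symm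
  set G : EuclideanSpace ℝ (Fin d) → ℝ := fun u => ∫ s, (⟪v s, u⟫ : ℝ) ^ 2 ∂ν with hG
  have hsphere : ∀ w : EuclideanSpace ℝ (Fin d), ∫ u, (⟪w, u⟫ : ℝ) ^ 2 ∂μe = ‖w‖ ^ 2 / d := by
    intro w
    have hm : Measurable (fun u : EuclideanSpace ℝ (Fin d) => (⟪w, u⟫ : ℝ) ^ 2) :=
      ((continuous_const.inner continuous_id).pow 2).measurable
    rw [hμe, integral_map he_meas.aemeasurable hm.aestronglyMeasurable]
    exact sphere_moment P e he_meas he_norm he_unif w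
  have h2meas : Measurable fun z : EuclideanSpace ℝ (Fin d) × Ξ => (⟪v z.2, z.1⟫ : ℝ) ^ 2 :=
    (continuous_inner.measurable.comp
      ((hv_meas.comp measurable_snd).prodMk measurable_fst)).pow_const 2
  have h2int : Integrable (fun z : EuclideanSpace ℝ (Fin d) × Ξ => (⟪v z.2, z.1⟫ : ℝ) ^ 2) (μe.prod ν) := by
    have hbound : Integrable (fun z : EuclideanSpace ℝ (Fin d) × Ξ => ‖v z.2‖ ^ 2) (μe.prod ν) := by
      have := (integrable_const (1 : ℝ) : Integrable _ μe).mul_prod hgrad_int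
      simpa using this
    refine hbound.mono' h2meas.aestronglyMeasurable ?_
    filter_upwards [hae2] with z hz
    have h1 : |(⟪v z.2, z.1⟫ : ℝ)| ≤ ‖v z.2‖ * ‖z.1‖ := abs_real_inner_le_norm _ _
    rw [hz, mul_one] at h1
    rw [Real.norm_eq_abs, abs_of_nonneg (sq_nonneg _), ← sq_abs]
    exact pow_le_pow_left₀ (abs_nonneg _) h1 2
  have hGint : ∫ u, G u ∂μe = (∫ s, ‖v s‖ ^ 2 ∂ν) / d := by
    have hswap : ∫ u, (∫ s, (⟪v s, u⟫ : ℝ) ^ 2 ∂ν) ∂μe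
        = ∫ s, (∫ u, (⟪v s, u⟫ : ℝ) ^ 2 ∂μe) ∂ν :=
      integral_integral_swap (by exact h2int)
    rw [hG]
    rw [hswap]
    have : ∀ s, ∫ u, (⟪v s, u⟫ : ℝ) ^ 2 ∂μe = ‖v s‖ ^ 2 / d := fun s => hsphere (v s)
    rw [integral_congr_ae (Eventually.of_forall this)]
    exact integral_div _ _
  have hI1 : ∫ ω, K (r ω) ^ 2 * (⟪v (ξ ω), e ω⟫ : ℝ) ^ 2 ∂P
      = (∫ t, K t ^ 2 ∂μr) * ((∫ s, ‖v s‖ ^ 2 ∂ν) / d) := by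
    have hstep0 : ∫ ω, K (r ω) ^ 2 * (⟪v (ξ ω), e ω⟫ : ℝ) ^ 2 ∂P
        = ∫ p, f3 p ∂((μe.prod μr).prod ν) := by
      have h := integral_map (μ := P) hT_meas.aemeasurable hf3_meas.aestronglyMeasurable
      rw [hmap3] at h
      exact h.symm
    have hstep1 : ∫ p, f3 p ∂((μe.prod μr).prod ν)
        = ∫ q, K q.2 ^ 2 * G q.1 ∂(μe.prod μr) := by
      rw [integral_prod _ hf3_int]
      refine integral_congr_ae (Eventually.of_forall fun q => ?_)
      show (∫ y, K q.2 ^ 2 * (⟪v y, q.1⟫ : ℝ) ^ 2 ∂ν) = K q.2 ^ 2 * G q.1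
      exact integral_const_mul _ _
    have hstep2 : ∫ q : EuclideanSpace ℝ (Fin d) × ℝ, K q.2 ^ 2 * G q.1 ∂(μe.prod μr)
        = (∫ u, G u ∂μe) * (∫ t, K t ^ 2 ∂μr) := by
      have hcomm : (fun q : EuclideanSpace ℝ (Fin d) × ℝ => K q.2 ^ 2 * G q.1)
          = fun q : EuclideanSpace ℝ (Fin d) × ℝ => G q.1 * K q.2 ^ 2 := by
        funext q; ring
      rw [hcomm]
      exact integral_prod_mul G (fun t => K t ^ 2)
    rw [hstep0, hstep1, hstep2, hGint, mul_comm]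
  -- pointwise bound
  have hpt : ∀ᵐ ω ∂P, ‖((d : ℝ) / (2 * γ) *
          ((F (x + (γ * r ω) • e ω) (ξ ω) + δ (x + (γ * r ω) • e ω))
            - (F (x - (γ * r ω) • e ω) (ξ ω) + δ (x - (γ * r ω) • e ω))) * K (r ω)) • e ω‖ ^ 2
      ≤ 6 * (d : ℝ) ^ 2 * (K (r ω) ^ 2 * (⟪v (ξ ω), e ω⟫ : ℝ) ^ 2)
        + (3 / 4 * (d : ℝ) ^ 2 * L₂ ^ 2 * γ ^ 2 + 2 * (d : ℝ) ^ 2 * Δ ^ 2 / γ ^ 2)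
          * K (r ω) ^ 2 := by
    filter_upwards [hr_ae] with ω hω
    have hu1 : ‖e ω‖ = 1 := he_norm ω
    set t : ℝ := r ω with htdef
    set c : ℝ := (⟪v (ξ ω), e ω⟫ : ℝ) with hc
    have ht1 : t ^ 2 ≤ 1 := by
      have h1 := hω.1
      have h2 := hω.2
      nlinarith
    -- Taylor estimates
    have h₁ := taylor_quad (fun y => F y (ξ ω)) L₂ (hF_diff (ξ ω)) (hF_lip (ξ ω)) x
      ((γ * t) • e ω)
    have h₂ := taylor_quad (fun y => F y (ξ ω)) L₂ (hF_diff (ξ ω)) (hF_lip (ξ ω)) x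
      (-((γ * t) • e ω))
    have hxm : x + -((γ * t) • e ω) = x - (γ * t) • e ω := (sub_eq_add_neg _ _).symm
    rw [hxm, inner_neg_right, norm_neg] at h₂
    have hinn : (⟪gradient (fun y => F y (ξ ω)) x, (γ * t) • e ω⟫ : ℝ) = (γ * t) * c := by
      rw [real_inner_smul_right]
    rw [hinn] at h₁ h₂
    have hnh : ‖(γ * t) • e ω‖ ^ 2 = (γ * t) ^ 2 := by
      rw [norm_smul, hu1, mul_one, Real.norm_eq_abs, sq_abs]
    rw [hnh] at h₁ h₂
    set A : ℝ := F (x + (γ * t) • e ω) (ξ ω) - F (x - (γ * t) • e ω) (ξ ω) with hA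
    set B : ℝ := δ (x + (γ * t) • e ω) - δ (x - (γ * t) • e ω) with hB
    have hA_est : |A - 2 * (γ * t) * c| ≤ L₂ * (γ * t) ^ 2 := by
      have e1 := abs_le.mp h₁
      have e2 := abs_le.mp h₂
      rw [abs_le, hA]
      constructor <;> linarith [e1.1, e1.2, e2.1, e2.2]
    have hB_est : |B| ≤ 2 * Δ := by
      rw [hB, sub_eq_add_neg]
      refine (abs_add_le _ _).trans ?_
      rw [abs_neg]
      linarith [hδ (x + (γ * t) • e ω), hδ (x - (γ * t) • e ω)]
    -- squares
    have hA2 : (A - 2 * (γ * t) * c) ^ 2 ≤ (L₂ * (γ * t) ^ 2) ^ 2 := by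
      rw [← sq_abs]
      exact pow_le_pow_left₀ (abs_nonneg _) hA_est 2
    have hB2 : B ^ 2 ≤ (2 * Δ) ^ 2 := by
      rw [← sq_abs]
      exact pow_le_pow_left₀ (abs_nonneg _) hB_est 2
    have key1 : (0:ℝ) ≤ (γ * c) ^ 2 * (1 - t ^ 2) :=
      mul_nonneg (sq_nonneg _) (by linarith)
    have key2 : (0:ℝ) ≤ (L₂ * γ ^ 2) ^ 2 * ((1 - t ^ 2) * (1 + t ^ 2)) :=
      mul_nonneg (sq_nonneg _) (mul_nonneg (by linarith) (by positivity))
    have h24 : (2 * (γ * t) * c) ^ 2 ≤ 4 * γ ^ 2 * c ^ 2 := by nlinarith [key1]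
    have ht4 : (L₂ * (γ * t) ^ 2) ^ 2 ≤ L₂ ^ 2 * γ ^ 4 := by nlinarith [key2]
    have hS2 : (A + B) ^ 2 ≤ 24 * γ ^ 2 * c ^ 2 + 3 * L₂ ^ 2 * γ ^ 4 + 8 * Δ ^ 2 := by
      nlinarith [hA2, hB2, h24, ht4, sq_nonneg (A - B),
        sq_nonneg (2 * (2 * (γ * t) * c) - (A - 2 * (γ * t) * c))]
    -- assemble
    have hsum : (F (x + (γ * t) • e ω) (ξ ω) + δ (x + (γ * t) • e ω))
        - (F (x - (γ * t) • e ω) (ξ ω) + δ (x - (γ * t) • e ω)) = A + B := by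
      rw [hA, hB]; ring
    rw [norm_smul, hu1, mul_one, Real.norm_eq_abs, sq_abs, hsum]
    have hL : ((d : ℝ) / (2 * γ) * (A + B) * K t) ^ 2
        = (d : ℝ) ^ 2 * K t ^ 2 * (A + B) ^ 2 / (4 * γ ^ 2) := by
      field_simp
      ring
    rw [hL]
    have hmono : (d : ℝ) ^ 2 * K t ^ 2 * (A + B) ^ 2 / (4 * γ ^ 2)
        ≤ (d : ℝ) ^ 2 * K t ^ 2 * (24 * γ ^ 2 * c ^ 2 + 3 * L₂ ^ 2 * γ ^ 4 + 8 * Δ ^ 2)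
          / (4 * γ ^ 2) := by
      apply div_le_div_of_nonneg_right ?_ (by positivity)
      exact mul_le_mul_of_nonneg_left hS2 (by positivity)
    refine hmono.trans (le_of_eq ?_)
    field_simp
    ring
  -- put everything together
  have hBnd_int : Integrable (fun ω =>
      6 * (d : ℝ) ^ 2 * (K (r ω) ^ 2 * (⟪v (ξ ω), e ω⟫ : ℝ) ^ 2)
        + (3 / 4 * (d : ℝ) ^ 2 * L₂ ^ 2 * γ ^ 2 + 2 * (d : ℝ) ^ 2 * Δ ^ 2 / γ ^ 2)
          * K (r ω) ^ 2) P :=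
    (hcomp_int.const_mul _).add (hK2_int.const_mul _)
  have hfinal := integral_mono_of_nonneg
    (Eventually.of_forall fun ω => by positivity) hBnd_int hpt
  have hBnd_val : ∫ ω, (6 * (d : ℝ) ^ 2 * (K (r ω) ^ 2 * (⟪v (ξ ω), e ω⟫ : ℝ) ^ 2)
        + (3 / 4 * (d : ℝ) ^ 2 * L₂ ^ 2 * γ ^ 2 + 2 * (d : ℝ) ^ 2 * Δ ^ 2 / γ ^ 2)
          * K (r ω) ^ 2) ∂P
      = 6 * (d : ℝ) ^ 2 * ((∫ ω, K (r ω) ^ 2 ∂P) * ((∫ s, ‖v s‖ ^ 2 ∂ν) / d))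
        + (3 / 4 * (d : ℝ) ^ 2 * L₂ ^ 2 * γ ^ 2 + 2 * (d : ℝ) ^ 2 * Δ ^ 2 / γ ^ 2)
          * (∫ ω, K (r ω) ^ 2 ∂P) := by
    rw [integral_add (hcomp_int.const_mul _) (hK2_int.const_mul _),
      integral_const_mul, integral_const_mul, hI1, ← hκ]
  rw [hBnd_val] at hfinal
  refine hfinal.trans (le_of_eq ?_)
  field_simp
  ring
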